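/- arXiv:1003.4398 — 5 statements merged into one kernel-verified Lean document; each statement's English description precedes it below -/
import Mathlib

section
/- For every (m+1)-colored rooted tree τ, the doubling index 𝔡 defined by 𝔡(∅)=0, 𝔡(•_l)=1, and 𝔡([τ₁,…,τ_κ]_l) = max_j 𝔡(τ_j) if exactly one of the τ_j attains the maximum, and max_j 𝔡(τ_j)+1 if at least two of the τ_j attain the maximum, satisfies: if 𝔡(τ)=k with k≥1, then ρ(τ) ≥ 2^{k−1} − 1/2. -/
inductive CTree (m : ℕ) : Type
  | node : Fin (m + 1) → List (CTree m) → CTree m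

namespace CTree

variable {m : ℕ}

def rho : CTree m → ℚ
  | .node l ts => (if (l : ℕ) = 0 then 1 else 1/2) + (ts.attach.map (fun t => rho t.1)).sum
decreasing_by
  all_goals try simp only [CTree.node.sizeOf_spec, List.cons.sizeOf_spec, List.nil.sizeOf_spec]
  all_goals try have := List.sizeOf_lt_of_mem t.2
  all_goals omega

def height : CTree m → ℕ
  | .node _ ts => 1 + (ts.attach.map (fun t => height t.1)).foldr max 0
decreasing_by
  all_goals try simp only [CTree.node.sizeOf_spec, List.cons.sizeOf_spec, List.nil.sizeOf_spec]
  all_goals try have := List.sizeOf_lt_of_mem t.2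
  all_goals omega

def ram : CTree m → ℕ
  | .node _ [] => 1
  | .node _ [t] => ram t
  | .node _ ts => 1 + (ts.attach.map (fun t => ram t.1)).foldr max 0
decreasing_by
  all_goals try simp only [CTree.node.sizeOf_spec, List.cons.sizeOf_spec, List.nil.sizeOf_spec]
  all_goals try have := List.sizeOf_lt_of_mem t.2
  all_goals omega

def dbl : CTree m → ℕ
  | .node _ [] => 1
  | .node _ ts =>
      let ds := ts.attach.map (fun t => dbl t.1)
      let M := ds.foldr max 0
      if 2 ≤ ds.count M then M + 1 else M
decreasing_by
  all_goals try simp only [CTree.node.sizeOf_spec, List.cons.sizeOf_spec, List.nil.sizeOf_spec]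
  all_goals try have := List.sizeOf_lt_of_mem t.2
  all_goals omega


end CTree

namespace CTree

variable {m : ℕ}

lemma le_foldr_max' {a : ℕ} {l : List ℕ} (h : a ∈ l) : a ≤ l.foldr max 0 := by
  induction l with
  | nil => simp at h
  | cons b t ih =>
    simp only [List.foldr_cons]
    rcases List.mem_cons.mp h with h | h
    · exact h ▸ le_max_left _ _
    · exact le_trans (ih h) (le_max_right _ _)

lemma foldr_max_mem' {l : List ℕ} (h : l ≠ []) : l.foldr max 0 ∈ l := by
  induction l with
  | nil => simp at h
  | cons b t ih =>
    cases t with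
    | nil => simp
    | cons c s =>
      by_cases hb : List.foldr max 0 (c :: s) ≤ b
      · rw [List.foldr_cons, max_eq_left hb]; exact List.mem_cons_self
      · push_neg at hb
        rw [List.foldr_cons, max_eq_right hb.le]
        exact List.mem_cons_of_mem _ (ih (by simp))

lemma sum_map_ite' {α : Type*} (l : List α) (f : α → ℕ) (M : ℕ) (c : ℚ) :
    (l.map (fun x => if f x = M then c else 0)).sum = ((l.map f).count M : ℚ) * c := by
  induction l with
  | nil => simp
  | cons a t ih =>
    simp only [List.map_cons, List.sum_cons, List.count_cons, ih]
    by_cases h : f a = M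
    · simp only [h, if_pos rfl, beq_self_eq_true, if_true]
      push_cast; ring
    · have : ¬ (f a == M) = true := by simpa using h
      simp [h, this]

theorem rho_nonneg : ∀ τ : CTree m, 0 ≤ rho τ
  | .node l ts => by
    rw [rho]
    have h1 : (0:ℚ) ≤ if (l:ℕ) = 0 then 1 else 1/2 := by split <;> norm_num
    have h2 : 0 ≤ (ts.attach.map fun t => rho t.1).sum := by
      apply List.sum_nonneg
      rintro x hx
      obtain ⟨t, ht, rfl⟩ := List.mem_map.mp hx
      exact rho_nonneg t.1
    linarith
termination_by τ => sizeOf τ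
decreasing_by
  have := List.sizeOf_lt_of_mem t.2
  simp only [CTree.node.sizeOf_spec]
  omega

theorem one_le_dbl : ∀ τ : CTree m, 1 ≤ dbl τ
  | .node l [] => by simp [dbl]
  | .node l (t :: ts) => by
    rw [dbl]
    · have hmem : dbl t ∈ (t :: ts).attach.map (fun x => dbl x.1) :=
        List.mem_map.mpr ⟨⟨t, by simp⟩, List.mem_attach _ _, rfl⟩
      have h1 : 1 ≤ dbl t := one_le_dbl t
      have h2 := le_foldr_max' hmem
      split <;> omega
    · simp
termination_by τ => sizeOf τ
decreasing_by
  simp only [CTree.node.sizeOf_spec, List.cons.sizeOf_spec]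
  omega

theorem aux_main : ∀ τ : CTree m, (2 : ℚ) ^ (dbl τ - 1) - 1/2 ≤ rho τ
  | .node l [] => by
    rw [dbl, rho]
    split <;> norm_num
  | .node l (t :: ts) => by
    rw [dbl, rho]
    · set ds : List ℕ := (t :: ts).attach.map (fun x => dbl x.1) with hds
      set M : ℕ := ds.foldr max 0 with hM
      set c : ℚ := 2 ^ (M - 1) - 1/2 with hc
      have hmemt0 : dbl t ∈ ds := List.mem_map.mpr ⟨⟨t, by simp⟩, List.mem_attach _ _, rfl⟩
      clear_value c M ds
      have hM1 : 1 ≤ M := by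
        have h := le_foldr_max' hmemt0
        rw [← hM] at h
        exact le_trans (one_le_dbl t) h
      have hc0 : 0 ≤ c := by
        have h1 : (1:ℚ) = 2 ^ (0:ℕ) := by norm_num
        have h2 : (2:ℚ) ^ (0:ℕ) ≤ 2 ^ (M - 1) :=
          pow_le_pow_right₀ (by norm_num) (Nat.zero_le _)
        rw [hc]; linarith
      have hw : (1/2 : ℚ) ≤ if (l:ℕ) = 0 then 1 else 1/2 := by split <;> norm_num
      have hptwise : ∀ x ∈ (t :: ts).attach, (if dbl x.1 = M then c else 0) ≤ rho x.1 := by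
        intro x _
        split
        · next hx =>
          have := aux_main x.1
          rw [hx, ← hc] at this
          exact this
        · exact rho_nonneg x.1
      have hsum : ((t :: ts).attach.map (fun x => if dbl x.1 = M then c else 0)).sum ≤
          ((t :: ts).attach.map (fun x => rho x.1)).sum := List.sum_le_sum hptwise
      rw [sum_map_ite' (t :: ts).attach (fun x => dbl x.1) M c, ← hds] at hsum
      have h2c : 2 * (2:ℚ) ^ (M - 1) = 2 ^ M := by
        rw [← pow_succ']
        congr 1
        omega
      split
      · next hcount =>
        have hcQ : (2 : ℚ) ≤ (ds.count M : ℚ) := by exact_mod_cast hcount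
        have hmul : 2 * c ≤ (ds.count M : ℚ) * c := mul_le_mul_of_nonneg_right hcQ hc0
        have hpow : (2:ℚ) ^ (M + 1 - 1) = 2 ^ M := by congr 1
        rw [hpow]
        linarith [hc]
      · next hcount =>
        have hMmem : M ∈ ds := by
          rw [hM]
          exact foldr_max_mem' (by rw [hds]; simp)
        have h1 : 1 ≤ ds.count M := List.count_pos_iff.mpr hMmem
        have hcQ : (1 : ℚ) ≤ (ds.count M : ℚ) := by exact_mod_cast h1
        have hmul : 1 * c ≤ (ds.count M : ℚ) * c := mul_le_mul_of_nonneg_right hcQ hc0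
        linarith [hc]
    · simp
termination_by τ => sizeOf τ
decreasing_by
  have := List.sizeOf_lt_of_mem x.2
  simp only [CTree.node.sizeOf_spec, List.cons.sizeOf_spec] at this ⊢
  omega

end CTree

open CTree in
theorem stmt2 (m : ℕ) (τ : CTree m) (k : ℕ) (hk : 1 ≤ k) (h : dbl τ = k) :
    (2 : ℚ) ^ (k - 1) - 1/2 ≤ rho τ := by
  subst h
  exact aux_main τ
end

section
/- For q ≥ 1/2, the maximum of the ramification function over all (m+1)-colored rooted trees of order at most q equals ⌊q + 1/2⌋: max{𝔯(τ) : τ ∈ T, ρ(τ) ≤ q} = ⌊q + 1/2⌋, where m ≥ 1. -/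
namespace CTree
variable {m : ℕ}

lemma rho_node (l : Fin (m+1)) (ts : List (CTree m)) :
    rho (node l ts) = (if (l : ℕ) = 0 then 1 else 1/2) + (ts.map rho).sum := by
  rw [rho]
  simp [List.attach_map_val]

lemma strongInd {P : CTree m → Prop}
    (h : ∀ l ts, (∀ t ∈ ts, P t) → P (.node l ts)) : ∀ τ, P τ := by
  intro τ
  induction τ using CTree.rec (motive_2 := fun ts => ∀ t ∈ ts, P t) with
  | node l ts ih => exact h l ts ih
  | nil =>
      rename_i x hx
      exact absurd hx List.not_mem_nil
  | cons t ts iht ihts =>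
      rename_i x hx
      rcases List.mem_cons.1 hx with h | h
      · exact h ▸ iht
      · exact ihts x h

end CTree
namespace CTree
variable {m : ℕ}

lemma ram_node2 (l : Fin (m+1)) (t1 t2 : CTree m) (rest : List (CTree m)) :
    ram (node l (t1::t2::rest)) = 1 + ((t1::t2::rest).map ram).foldr max 0 := by
  rw [ram]
  all_goals simp [List.attach_map_val]

lemma rho_ge_half : ∀ τ : CTree m, 1/2 ≤ rho τ := by
  apply strongInd
  intro l ts ih
  rw [rho_node]
  have h1 : (0:ℚ) ≤ (ts.map rho).sum := by
    apply List.sum_nonneg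
    intro x hx
    obtain ⟨t, ht, rfl⟩ := List.mem_map.1 hx
    linarith [ih t ht]
  split <;> linarith

lemma sum_rho_nonneg (ts : List (CTree m)) : (0:ℚ) ≤ (ts.map rho).sum := by
  apply List.sum_nonneg
  intro x hx
  obtain ⟨t, ht, rfl⟩ := List.mem_map.1 hx
  linarith [rho_ge_half t]

lemma foldr_ram_le (L : List (CTree m)) (hL : ∀ t ∈ L, (ram t : ℚ) ≤ rho t + 1/2) :
    (((L.map ram).foldr max 0 : ℕ) : ℚ) ≤ (L.map rho).sum + 1/2 := by
  induction L with
  | nil => norm_num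
  | cons t L ih =>
      simp only [List.map_cons, List.foldr_cons, List.sum_cons, Nat.cast_max]
      have h1 := hL t List.mem_cons_self
      have h2 := ih (fun x hx => hL x (List.mem_cons_of_mem t hx))
      have h3 := sum_rho_nonneg L
      have h4 := rho_ge_half t
      rw [max_le_iff]
      constructor <;> linarith

lemma ram_le : ∀ τ : CTree m, (ram τ : ℚ) ≤ rho τ + 1/2 := by
  apply strongInd
  intro l ts ih
  have hw : (1/2:ℚ) ≤ if (l : ℕ) = 0 then 1 else 1/2 := by split <;> norm_num
  match ts, ih with
  | [], _ =>
      rw [show ram (node l []) = 1 from by rw [ram], rho_node]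
      simp only [List.map_nil, List.sum_nil]
      push_cast
      linarith
  | [t], ih =>
      rw [show ram (node l [t]) = ram t from by rw [ram], rho_node]
      have := ih t (by simp)
      have := rho_ge_half t
      simp only [List.map_cons, List.map_nil, List.sum_cons, List.sum_nil]
      linarith
  | t1::t2::rest, ih =>
      rw [ram_node2, rho_node]
      have h1 := ih t1 (by simp)
      have h2 : ∀ t ∈ t2::rest, (ram t : ℚ) ≤ rho t + 1/2 := fun t ht => ih t (by simp [ht])
      have h3 := foldr_ram_le (t2::rest) h2
      have h4 := rho_ge_half t1
      have h5 := rho_ge_half t2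
      have h6 := sum_rho_nonneg rest
      simp only [List.map_cons, List.sum_cons, List.foldr_cons, Nat.cast_max] at *
      rw [Nat.cast_add, Nat.cast_one, Nat.cast_max, Nat.cast_max]
      rw [max_le_iff] at h3
      rcases le_total ((ram t1 : ℚ)) (max ((ram t2 : ℚ)) ((List.foldr max 0 (List.map ram rest) : ℕ) : ℚ)) with hc | hc
      · rw [max_eq_right hc]
        rcases max_cases ((ram t2 : ℚ)) ((List.foldr max 0 (List.map ram rest) : ℕ) : ℚ) with ⟨he, _⟩ | ⟨he, _⟩ <;> rw [he] <;> linarith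
      · rw [max_eq_left hc]
        linarith

end CTree
namespace CTree

def bush (m : ℕ) : ℕ → CTree m
  | 0 => .node (Fin.last m) []
  | n+1 => .node (Fin.last m) [bush m n, .node (Fin.last m) []]

lemma rho_bush {m : ℕ} (hm : 1 ≤ m) : ∀ n, rho (bush m n) = n + 1/2 := by
  have hl : ((Fin.last m : Fin (m+1)) : ℕ) = m := rfl
  have hm' : ¬ (m = 0) := by omega
  intro n
  induction n with
  | zero => rw [bush, rho_node]; simp [hl, hm']
  | succ n ih =>
      rw [bush, rho_node]
      simp only [List.map_cons, List.map_nil, List.sum_cons, List.sum_nil, ih]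
      rw [rho_node]
      simp only [hl, hm', if_false, List.map_nil, List.sum_nil]
      push_cast
      ring

lemma ram_bush (m : ℕ) : ∀ n, ram (bush m n) = n + 1 := by
  intro n
  induction n with
  | zero => rw [bush, ram]
  | succ n ih =>
      rw [bush, ram_node2]
      simp only [List.map_cons, List.map_nil, List.foldr_cons, List.foldr_nil, ih]
      rw [show ram (node (Fin.last m) ([] : List (CTree m))) = 1 from by rw [ram]]
      omega

end CTree

open CTree in
theorem stmt4 (m : ℕ) (hm : 1 ≤ m) (q : ℚ) (hq : 1/2 ≤ q) :
    IsGreatest {k : ℕ | ∃ τ : CTree m, rho τ ≤ q ∧ ram τ = k} (⌊q + 1/2⌋.toNat) := by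
  have hfl : 1 ≤ ⌊q + 1/2⌋ := by
    rw [Int.le_floor]
    push_cast
    linarith
  set n := ⌊q + 1/2⌋.toNat with hn
  have hn1 : 1 ≤ n := by rw [hn]; omega
  constructor
  · refine ⟨bush m (n-1), ?_, ?_⟩
    · rw [rho_bush hm]
      have : ((n:ℤ) : ℚ) ≤ q + 1/2 := by
        rw [hn]
        rw [Int.toNat_of_nonneg (by omega)]
        exact Int.floor_le _
      push_cast at this
      have hcast : ((n-1 : ℕ) : ℚ) = (n:ℚ) - 1 := by
        push_cast [Nat.cast_sub hn1]
        ring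
      rw [hcast]
      linarith
    · rw [ram_bush]
      omega
  · rintro k ⟨τ, hτq, rfl⟩
    have h1 := ram_le τ
    have : ((ram τ : ℤ) : ℚ) ≤ q + 1/2 := by push_cast; linarith
    rw [← Int.le_floor] at this
    omega
end

section
/- For semi-implicit methods, the growth function 𝔯_s defined by 𝔯_s(∅)=0, 𝔯_s(•_l)=1, 𝔯_s([τ₁,…,τ_κ]_l)=1 for l>0, 𝔯_s([τ₁]_0)=𝔯_s(τ₁), and 𝔯_s([τ₁,…,τ_κ]_0)=1+max_j 𝔯_s(τ_j) for κ≥2, satisfies: if 𝔯_s(τ)=k with k≥1, then ρ(τ) ≥ (3/2)k − 1. -/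
namespace CTree

variable {m : ℕ}

/-- semi-implicit height-type growth function 𝔥ₛ -/
def hs : CTree m → ℕ
  | .node l ts => if 0 < (l : ℕ) then 1 else 1 + (ts.attach.map (fun t => hs t.1)).foldr max 0
decreasing_by
  all_goals try simp only [CTree.node.sizeOf_spec, List.cons.sizeOf_spec, List.nil.sizeOf_spec]
  all_goals try have := List.sizeOf_lt_of_mem t.2
  all_goals omega

/-- semi-implicit ramification-type growth function 𝔯ₛ -/
def rs : CTree m → ℕ
  | .node _ [] => 1
  | .node l [t] => if 0 < (l : ℕ) then 1 else rs t
  | .node l ts => if 0 < (l : ℕ) then 1 else 1 + (ts.attach.map (fun t => rs t.1)).foldr max 0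
decreasing_by
  all_goals try simp only [CTree.node.sizeOf_spec, List.cons.sizeOf_spec, List.nil.sizeOf_spec]
  all_goals try have := List.sizeOf_lt_of_mem t.2
  all_goals omega

/-- semi-implicit doubling-type growth function 𝔡ₛ -/
def dsm : CTree m → ℕ
  | .node _ [] => 1
  | .node l ts =>
      if 0 < (l : ℕ) then 1 else
      let vals := ts.attach.map (fun t => dsm t.1)
      let M := vals.foldr max 0
      if 2 ≤ vals.count M then M + 1 else M
decreasing_by
  all_goals try simp only [CTree.node.sizeOf_spec, List.cons.sizeOf_spec, List.nil.sizeOf_spec]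
  all_goals try have := List.sizeOf_lt_of_mem t.2
  all_goals omega


end CTree


private lemma foldr_max_mem : ∀ (l : List ℕ), l ≠ [] → l.foldr max 0 ∈ l
  | [a], _ => by simp
  | a :: b :: l, _ => by
    have ih := foldr_max_mem (b :: l) (by simp)
    simp only [List.foldr_cons] at *
    rcases le_total a (max b (List.foldr max 0 l)) with h | h
    · rw [max_eq_right h]; exact List.mem_cons_of_mem _ ih
    · rw [max_eq_left h]; exact List.mem_cons_self

namespace CTree

private lemma rho_half {m : ℕ} (τ : CTree m) : (1:ℚ)/2 ≤ rho τ := by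
  induction τ using rho.induct with
  | _ l ts ih =>
    rw [rho]
    have hs : 0 ≤ (ts.attach.map (fun t => rho t.1)).sum := by
      apply List.sum_nonneg
      intro x hx
      simp only [List.mem_map] at hx
      obtain ⟨t, ht, rfl⟩ := hx
      linarith [ih t]
    split <;> linarith

private lemma sum_map_rho_ge {m : ℕ} (l : List (CTree m)) :
    (l.length : ℚ)/2 ≤ (l.map rho).sum := by
  induction l with
  | nil => simp
  | cons a l ih =>
    simp only [List.map_cons, List.sum_cons, List.length_cons]
    push_cast
    linarith [rho_half a]

private lemma rs_bound {m : ℕ} (τ : CTree m) : (3:ℚ)/2 * rs τ - 1 ≤ rho τ := by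
  induction τ using rs.induct with
  | case1 a =>
    rw [rs, rho]
    have : (0:ℚ) ≤ ∑' _ : Empty, (0:ℚ) := by simp
    simp only [List.attach_nil, List.map_nil, List.sum_nil, add_zero, Nat.cast_one]
    split <;> norm_num
  | case2 l t hl =>
    rw [rs]
    simp only [if_pos hl, Nat.cast_one]
    linarith [rho_half (node l [t])]
  | case3 l t hl ih =>
    rw [rs, rho]
    simp only [if_neg hl]
    have hl0 : (l : ℕ) = 0 := by omega
    simp only [hl0, if_pos, List.attach_cons, List.map_cons, List.map_nil, List.sum_cons,
      List.sum_nil, add_zero, List.attach_nil, if_true]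
    linarith [ih]
  | case4 l ts h0 h1 hl =>
    rw [rs.eq_3 l ts h0 h1]
    simp only [if_pos hl, Nat.cast_one]
    linarith [rho_half (node l ts)]
  | case5 l ts h0 h1 hl ih =>
    rw [rs.eq_3 l ts h0 h1, if_neg hl, rho]
    have hl0 : (l : ℕ) = 0 := by omega
    rw [if_pos hl0]
    have hmapeq2 : (ts.attach.map (fun t => rho t.1)) = ts.map rho := by simp
    have hmapeq : (ts.attach.map (fun t => rs t.1)) = ts.map rs := by simp
    rw [hmapeq2, hmapeq]
    set M : ℕ := (ts.map rs).foldr max 0 with hM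
    have hne : ts.map rs ≠ [] := by
      intro h; apply h0; simpa using h
    have hmem : M ∈ ts.map rs := foldr_max_mem _ hne
    obtain ⟨t₀, ht₀, hrs₀⟩ := List.mem_map.mp hmem
    have hbound := ih ⟨t₀, ht₀⟩
    simp only at hbound
    rw [hrs₀] at hbound
    obtain ⟨s₁, s₂, hts⟩ := List.append_of_mem ht₀
    have hlen : 2 ≤ ts.length := by
      rcases ts with _ | ⟨a, _ | ⟨b, ts'⟩⟩
      · exact absurd rfl h0
      · exact absurd rfl (h1 a)
      · simp
    have hsum : (ts.map rho).sum = (s₁.map rho).sum + rho t₀ + (s₂.map rho).sum := by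
      rw [hts]; simp; ring
    have hlen' : 1 ≤ s₁.length + s₂.length := by
      rw [hts] at hlen; simp at hlen; omega
    have h₁ := sum_map_rho_ge s₁
    have h₂ := sum_map_rho_ge s₂
    have hq : (1:ℚ) ≤ s₁.length + s₂.length := by exact_mod_cast hlen'
    rw [hsum]
    push_cast
    linarith

end CTree

open CTree in
theorem stmt10 (m : ℕ) (τ : CTree m) (k : ℕ) (hk : 1 ≤ k) (h : rs τ = k) :
    (3 : ℚ) / 2 * k - 1 ≤ rho τ := by
  subst h
  exact CTree.rs_bound τ
end

section
/- If Φ₀(τ)=Φ(τ) for all colored rooted trees τ with 𝔥(τ) ≤ G₀, and Φ_{k+1} is defined by the simple iteration recursion Φ_{k+1}(∅)=1, Φ_{k+1}(τ) = Φ_ex(τ) + (Φ_k ∘ Φ_im)(τ), where Φ satisfies Φ(τ) = Φ_ex(τ) + (Φ ∘ Φ_im)(τ), then for all k ≥ 0, Φ_k(τ) = Φ(τ) for all τ with 𝔥(τ) ≤ G₀ + k, where 𝔥 is the height function on trees. -/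
namespace CTree

variable {m : ℕ}

/-- All ordered splittings of a tree `τ` into a root-sharing subtree `θ` (`none` = empty tree)
together with the list of remainder trees `ω` left over when `θ` is removed from `τ`. -/
def split : CTree m → List (Option (CTree m) × List (CTree m))
  | .node l ts =>
    (none, [.node l ts]) ::
    ((ts.attach.map (fun t => split t.1)).sections.map
      (fun cs => (some (.node l (cs.filterMap Prod.fst)), (cs.map Prod.snd).flatten)))
decreasing_by
  all_goals try simp only [CTree.node.sizeOf_spec, List.cons.sizeOf_spec, List.nil.sizeOf_spec]
  all_goals try have := List.sizeOf_lt_of_mem t.2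
  all_goals omega

/-- Composition of B--series coefficient maps: `comp φx φy` is the coefficient map of
`B(φy, B(φx, x₀; h); h)`.  Coefficient maps are defined on `Option (CTree m)`,
with `none` playing the role of the empty tree ∅. -/
def comp {R : Type*} [CommRing R] (φx φy : Option (CTree m) → R) : Option (CTree m) → R
  | none => φy none
  | some τ => ((split τ).map (fun p => φy p.1 * (p.2.map (fun δ => φx (some δ))).prod)).sum

/-- The bilinear operation `∗`: sum over splittings with exactly one remainder tree. -/
def star {R : Type*} [CommRing R] (φx φy : Option (CTree m) → R) (τ : CTree m) : R :=
  (((split τ).filter (fun p => p.2.length == 1)).map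
    (fun p => φy p.1 * (p.2.map (fun δ => φx (some δ))).prod)).sum


lemma aux_forall2_mem {α β : Type*} {r : α → β → Prop} {as : List α} {bs : List β}
    (h : List.Forall₂ r as bs) {a : α} (ha : a ∈ as) : ∃ b ∈ bs, r a b := by
  induction h with
  | nil => simp at ha
  | cons hr _ ih =>
    rcases List.mem_cons.1 ha with rfl | ha
    · exact ⟨_, List.mem_cons_self, hr⟩
    · obtain ⟨b, hb, hrb⟩ := ih ha
      exact ⟨b, List.mem_cons_of_mem _ hb, hrb⟩

lemma aux_le_foldr_max {α : Type*} (f : α → ℕ) (l : List α) {x : α} (hx : x ∈ l) :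
    f x ≤ (l.map f).foldr max 0 := by
  induction l with
  | nil => simp at hx
  | cons a l ih =>
    rcases List.mem_cons.1 hx with rfl | hx
    · simp [Nat.le_max_left]
    · simpa using Or.inr (ih hx)

lemma split_height_bound : ∀ (τ : CTree m) (p : Option (CTree m) × List (CTree m)),
    p ∈ split τ → ∀ δ ∈ p.2,
      height δ ≤ height τ ∧ (p.1 ≠ none → height δ < height τ) := by
  intro τ
  induction τ using split.induct with
  | _ l ts ih =>
    intro p hp δ hδ
    rw [split] at hp
    rcases List.mem_cons.1 hp with rfl | hp
    · simp only [List.mem_singleton] at hδ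
      subst hδ
      exact ⟨le_refl _, fun h => absurd rfl h⟩
    · obtain ⟨cs, hcs, rfl⟩ := List.mem_map.1 hp
      simp only [List.mem_flatten, List.mem_map] at hδ
      obtain ⟨_, ⟨c, hc, rfl⟩, hδc⟩ := hδ
      have hsec := List.mem_sections.1 hcs
      obtain ⟨ls, hls, hcls⟩ := aux_forall2_mem hsec hc
      obtain ⟨t, ht, rfl⟩ := List.mem_map.1 hls
      have hb := (ih t c hcls δ hδc).1
      have hle : height t.1 ≤ (ts.attach.map (fun t => height t.1)).foldr max 0 :=
        aux_le_foldr_max (fun t => height t.1) ts.attach ht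
      have hτ : height (CTree.node l ts) =
          1 + (ts.attach.map (fun t => height t.1)).foldr max 0 := by rw [height]
      constructor
      · omega
      · intro _; omega

end CTree

open CTree in
theorem stmt17 {R : Type*} [CommRing R] (m : ℕ)
    (Φex Φim Φf : Option (CTree m) → R) (Φ : ℕ → Option (CTree m) → R) (G₀ : ℕ)
    (hex : Φex none = 1) (him : Φim none = 0)
    (hfe : Φf none = 1)
    (hf : ∀ τ : CTree m, Φf (some τ) = Φex (some τ) + comp Φf Φim (some τ))
    (h0e : Φ 0 none = 1)
    (h0 : ∀ τ : CTree m, height τ ≤ G₀ → Φ 0 (some τ) = Φf (some τ))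
    (hite : ∀ k, Φ (k + 1) none = 1)
    (hit : ∀ (k : ℕ) (τ : CTree m), Φ (k + 1) (some τ) =
        Φex (some τ) + comp (Φ k) Φim (some τ)) :
    ∀ (k : ℕ) (τ : CTree m), height τ ≤ G₀ + k → Φ k (some τ) = Φf (some τ) := by
  intro k
  induction k with
  | zero => intro τ hτ; exact h0 τ (by omega)
  | succ k ih =>
    intro τ hτ
    rw [hit, hf]
    congr 1
    simp only [comp]
    apply congrArg
    apply List.map_congr_left
    intro p hp
    rcases hp1 : p.1 with _ | θ
    · simp [hp1, him]
    · congr 1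
      apply congrArg
      apply List.map_congr_left
      intro δ hδ
      have hb := (split_height_bound τ p hp δ hδ).2 (by simp [hp1])
      exact ih δ (by omega)
end

section
/- The composition of B-series coefficient maps is associative in the following sense: for coefficient maps φ_x, φ_y with φ_x(∅)=φ_y(∅)=1 and any coefficient map φ_z on colored rooted trees, (φ_x ∘ (φ_y ∘ φ_z))(τ) = ((φ_x ∘ φ_y) ∘ φ_z)(τ) for all τ ∈ T. -/
namespace BAssoc
variable {R : Type*} [CommRing R]

def Sm {α : Type*} (l : List α) (f : α → R) : R := (l.map f).sum

@[simp] lemma Sm_nil {α} (f : α → R) : Sm ([] : List α) f = 0 := rfl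
@[simp] lemma Sm_cons {α} (a : α) (l : List α) (f : α → R) :
    Sm (a :: l) f = f a + Sm l f := by simp [Sm]

lemma Sm_map {α β} (g : α → β) (l : List α) (f : β → R) :
    Sm (l.map g) f = Sm l (fun a => f (g a)) := by simp [Sm, List.map_map]; rfl

lemma Sm_congr {α} {l : List α} {f f' : α → R} (h : ∀ a ∈ l, f a = f' a) :
    Sm l f = Sm l f' := by unfold Sm; rw [List.map_congr_left h]

lemma Sm_flatMap {α β} (l : List α) (g : α → List β) (f : β → R) :
    Sm (l.flatMap g) f = Sm l (fun a => Sm (g a) f) := by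
  induction l with
  | nil => simp
  | cons a l ih => simp only [List.flatMap_cons, Sm, List.map_append, List.sum_append, List.map_cons, List.sum_cons] at *; rw [ih]

lemma Sm_add {α} (l : List α) (f g : α → R) :
    Sm l (fun a => f a + g a) = Sm l f + Sm l g := by
  induction l with
  | nil => simp
  | cons a l ih => simp [ih]; ring

lemma Sm_mul_right {α} (l : List α) (f : α → R) (c : R) :
    Sm l f * c = Sm l (fun a => f a * c) := by
  induction l with
  | nil => simp
  | cons a l ih => simp [add_mul, ih]

lemma Sm_mul_left {α} (l : List α) (f : α → R) (c : R) :
    c * Sm l f = Sm l (fun a => c * f a) := by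
  induction l with
  | nil => simp
  | cons a l ih => simp [mul_add, ih]

lemma Sm_comm {α β} (l : List α) (l' : List β) (f : α → β → R) :
    Sm l (fun a => Sm l' (f a)) = Sm l' (fun b => Sm l (fun a => f a b)) := by
  induction l with
  | nil =>
    simp only [Sm_nil]
    induction l' with
    | nil => simp
    | cons b l' ih => rw [Sm_cons, ← ih]; ring
  | cons a l ih => simp [ih, Sm_add]

lemma filterMap_cons_toList {α β} (f : α → Option β) (a : α) (l : List α) :
    List.filterMap f (a :: l) = (f a).toList ++ List.filterMap f l := by
  cases h : f a <;> simp [List.filterMap_cons, h]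

end BAssoc

namespace BAssoc
open CTree
variable {m : ℕ} {R : Type*} [CommRing R]

lemma attach_map_split (ts : List (CTree m)) :
    ts.attach.map (fun t => split t.1) = ts.map split := by
  simp [List.attach_map_val]

lemma split_node (l : Fin (m+1)) (ts : List (CTree m)) :
    split (CTree.node l ts) =
      (none, [CTree.node l ts]) ::
      ((ts.map split).sections.map
        (fun cs => (some (CTree.node l (cs.filterMap Prod.fst)), (cs.map Prod.snd).flatten))) := by
  rw [split, attach_map_split]

def splitO : Option (CTree m) → List (Option (CTree m) × List (CTree m))
  | none => [(none, ([] : List (CTree m)))]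
  | some t => split t

def Pf (f : Option (CTree m) → R) (ω : List (CTree m)) : R :=
  (ω.map (fun δ => f (some δ))).prod

@[simp] lemma Pf_nil (f : Option (CTree m) → R) : Pf f [] = 1 := rfl
@[simp] lemma Pf_cons (f : Option (CTree m) → R) (a : CTree m) (l : List (CTree m)) :
    Pf f (a :: l) = f (some a) * Pf f l := by simp [Pf]
lemma Pf_append (f : Option (CTree m) → R) (l l' : List (CTree m)) :
    Pf f (l ++ l') = Pf f l * Pf f l' := by simp [Pf]

lemma comp_eq_Sm (φx φy : Option (CTree m) → R) (τ : CTree m) :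
    comp φx φy (some τ) = Sm (split τ) (fun p => φy p.1 * Pf φx p.2) := rfl

lemma comp_splitO (φx φy : Option (CTree m) → R) (o : Option (CTree m)) :
    comp φx φy o = Sm (splitO o) (fun q => φy q.1 * Pf φx q.2) := by
  cases o with
  | none => simp [comp, splitO]
  | some τ => rfl

end BAssoc

namespace BAssoc
open CTree
variable {m : ℕ} {R : Type*} [CommRing R]

lemma Sm_sections_cons {α} (x : List α) (L : List (List α)) (f : List α → R) :
    Sm (List.sections (x :: L)) f
    = Sm (List.sections L) (fun s => Sm x (fun a => f (a :: s))) := by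
  simp only [List.sections]
  rw [Sm_flatMap]
  apply Sm_congr; intro s _
  rw [Sm_map]

lemma inner_split (v : Option (CTree m)) (us : List (CTree m))
    (G : List (CTree m) → List (CTree m) → R) :
    Sm (((v.toList ++ us).map split).sections)
        (fun ds => G (ds.filterMap Prod.fst) ((ds.map Prod.snd).flatten))
    = Sm (splitO v) (fun q => Sm ((us.map split).sections)
        (fun ds' => G (q.1.toList ++ ds'.filterMap Prod.fst)
                      (q.2 ++ (ds'.map Prod.snd).flatten))) := by
  cases v with
  | none => simp [splitO]
  | some s =>
    have htl : (some s).toList ++ us = s :: us := rfl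
    rw [htl, List.map_cons, Sm_sections_cons]
    show _ = Sm (split s) _
    rw [Sm_comm]
    apply Sm_congr
    intro ds' _
    apply Sm_congr
    intro d _
    rw [filterMap_cons_toList, List.map_cons, List.flatten_cons]

lemma star_lem (φx φy : Option (CTree m) → R) (ts : List (CTree m)) (F : List (CTree m) → R)
    (hK : ∀ t ∈ ts, ∀ h : Option (CTree m) → R,
      Sm (split t) (fun p => Sm (splitO p.1) (fun q => h q.1 * Pf φy q.2) * Pf φx p.2)
      = Sm (split t) (fun p => h p.1 * Pf (comp φx φy) p.2)) :
    Sm ((ts.map split).sections) (fun cs =>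
      Sm (((cs.filterMap Prod.fst).map split).sections) (fun ds =>
        F (ds.filterMap Prod.fst) * Pf φy ((ds.map Prod.snd).flatten))
      * Pf φx ((cs.map Prod.snd).flatten))
    = Sm ((ts.map split).sections) (fun es =>
        F (es.filterMap Prod.fst) * Pf (comp φx φy) ((es.map Prod.snd).flatten)) := by
  induction ts generalizing F with
  | nil => simp [List.sections]
  | cons t rest ih =>
    have hKt := hK t List.mem_cons_self
    have hKrest : ∀ t' ∈ rest, ∀ h : Option (CTree m) → R,
        Sm (split t') (fun p => Sm (splitO p.1) (fun q => h q.1 * Pf φy q.2) * Pf φx p.2)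
        = Sm (split t') (fun p => h p.1 * Pf (comp φx φy) p.2) :=
      fun t' ht' => hK t' (List.mem_cons_of_mem t ht')
    rw [List.map_cons, Sm_sections_cons, Sm_sections_cons]
    -- abbreviations (as plain terms)
    calc
      Sm ((rest.map split).sections) (fun cs' => Sm (split t) (fun c =>
          Sm ((((c :: cs').filterMap Prod.fst).map split).sections) (fun ds =>
            F (ds.filterMap Prod.fst) * Pf φy ((ds.map Prod.snd).flatten))
          * Pf φx (((c :: cs').map Prod.snd).flatten)))
        = Sm ((rest.map split).sections) (fun cs' =>
            Sm (split t) (fun p =>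
              Sm (((cs'.filterMap Prod.fst).map split).sections) (fun ds' =>
                F (p.1.toList ++ ds'.filterMap Prod.fst)
                  * Pf φy ((ds'.map Prod.snd).flatten))
              * Pf (comp φx φy) p.2)
            * Pf φx ((cs'.map Prod.snd).flatten)) := by
        apply Sm_congr
        intro cs' _
        have e1 : ∀ c ∈ split t,
            Sm ((((c :: cs').filterMap Prod.fst).map split).sections) (fun ds =>
              F (ds.filterMap Prod.fst) * Pf φy ((ds.map Prod.snd).flatten))
            * Pf φx (((c :: cs').map Prod.snd).flatten)
            = Sm (splitO c.1) (fun q =>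
                Sm (((cs'.filterMap Prod.fst).map split).sections) (fun ds' =>
                  F (q.1.toList ++ ds'.filterMap Prod.fst)
                    * Pf φy ((ds'.map Prod.snd).flatten))
                * Pf φy q.2)
              * Pf φx c.2 * Pf φx ((cs'.map Prod.snd).flatten) := by
          intro c _
          rw [filterMap_cons_toList,
            inner_split c.1 (cs'.filterMap Prod.fst) (fun xs ys => F xs * Pf φy ys),
            List.map_cons, List.flatten_cons, Pf_append]
          have e2 : ∀ q ∈ splitO c.1,
              Sm (((cs'.filterMap Prod.fst).map split).sections) (fun ds' =>
                F (q.1.toList ++ ds'.filterMap Prod.fst)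
                  * Pf φy (q.2 ++ (ds'.map Prod.snd).flatten))
              = Sm (((cs'.filterMap Prod.fst).map split).sections) (fun ds' =>
                  F (q.1.toList ++ ds'.filterMap Prod.fst)
                    * Pf φy ((ds'.map Prod.snd).flatten))
                * Pf φy q.2 := by
            intro q _
            rw [Sm_mul_right]
            apply Sm_congr
            intro ds' _
            rw [Pf_append]; ring
          rw [Sm_congr e2]; ring
        rw [Sm_congr e1]
        rw [show (fun (c : Option (CTree m) × List (CTree m)) =>
              Sm (splitO c.1) (fun q =>
                Sm (((cs'.filterMap Prod.fst).map split).sections) (fun ds' =>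
                  F (q.1.toList ++ ds'.filterMap Prod.fst)
                    * Pf φy ((ds'.map Prod.snd).flatten))
                * Pf φy q.2)
              * Pf φx c.2 * Pf φx ((cs'.map Prod.snd).flatten))
            = (fun (c : Option (CTree m) × List (CTree m)) =>
              (Sm (splitO c.1) (fun q =>
                Sm (((cs'.filterMap Prod.fst).map split).sections) (fun ds' =>
                  F (q.1.toList ++ ds'.filterMap Prod.fst)
                    * Pf φy ((ds'.map Prod.snd).flatten))
                * Pf φy q.2)
              * Pf φx c.2) * Pf φx ((cs'.map Prod.snd).flatten)) from rfl]
        rw [← Sm_mul_right]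
        exact congrArg (fun z => z * Pf φx ((cs'.map Prod.snd).flatten))
          (hKt (fun v =>
            Sm (((cs'.filterMap Prod.fst).map split).sections) (fun ds' =>
              F (v.toList ++ ds'.filterMap Prod.fst) * Pf φy ((ds'.map Prod.snd).flatten))))
      _ = Sm (split t) (fun p =>
            Sm ((rest.map split).sections) (fun cs' =>
              Sm (((cs'.filterMap Prod.fst).map split).sections) (fun ds' =>
                F (p.1.toList ++ ds'.filterMap Prod.fst)
                  * Pf φy ((ds'.map Prod.snd).flatten))
              * Pf φx ((cs'.map Prod.snd).flatten))
            * Pf (comp φx φy) p.2) := by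
        rw [Sm_congr (fun cs' _ => Sm_mul_right (split t) _
          (Pf φx ((cs'.map Prod.snd).flatten)))]
        rw [Sm_comm]
        apply Sm_congr
        intro p _
        rw [Sm_mul_right]
        apply Sm_congr
        intro cs' _
        ring
      _ = Sm (split t) (fun p =>
            Sm ((rest.map split).sections) (fun es' =>
              F (p.1.toList ++ es'.filterMap Prod.fst)
                * Pf (comp φx φy) ((es'.map Prod.snd).flatten))
            * Pf (comp φx φy) p.2) := by
        apply Sm_congr
        intro p _
        exact congrArg (fun z => z * Pf (comp φx φy) p.2)
          (ih (fun xs => F (p.1.toList ++ xs)) hKrest)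
      _ = Sm ((rest.map split).sections) (fun es' => Sm (split t) (fun e =>
            F ((e :: es').filterMap Prod.fst)
              * Pf (comp φx φy) (((e :: es').map Prod.snd).flatten))) := by
        rw [Sm_comm]
        apply Sm_congr
        intro es' _
        rw [Sm_mul_right]
        apply Sm_congr
        intro e _
        rw [filterMap_cons_toList, List.map_cons, List.flatten_cons, Pf_append]
        ring

end BAssoc

namespace BAssoc
open CTree
variable {m : ℕ} {R : Type*} [CommRing R]

lemma Mlem (φx φy : Option (CTree m) → R) (hy : φy none = 1) :
    ∀ (n : ℕ) (t : CTree m), sizeOf t ≤ n → ∀ g : Option (CTree m) → R,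
    Sm (split t) (fun p => Sm (splitO p.1) (fun q => g q.1 * Pf φy q.2) * Pf φx p.2)
    = Sm (split t) (fun p => g p.1 * Pf (comp φx φy) p.2) := by
  intro n
  induction n with
  | zero =>
    intro t ht
    obtain ⟨l, ts⟩ := t
    simp only [CTree.node.sizeOf_spec] at ht
    omega
  | succ n ihn =>
    intro t ht g
    obtain ⟨l, ts⟩ := t
    simp only [CTree.node.sizeOf_spec] at ht
    have hK : ∀ t' ∈ ts, ∀ h : Option (CTree m) → R,
        Sm (split t') (fun p => Sm (splitO p.1) (fun q => h q.1 * Pf φy q.2) * Pf φx p.2)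
        = Sm (split t') (fun p => h p.1 * Pf (comp φx φy) p.2) := by
      intro t' ht' h
      apply ihn
      have := List.sizeOf_lt_of_mem ht'
      omega
    rw [split_node, Sm_cons, Sm_cons, Sm_map, Sm_map]
    simp only [splitO]
    have inner : ∀ cs ∈ (ts.map split).sections,
        Sm (split (CTree.node l (cs.filterMap Prod.fst))) (fun q => g q.1 * Pf φy q.2)
          * Pf φx ((cs.map Prod.snd).flatten)
        = (g none * φy (some (CTree.node l (cs.filterMap Prod.fst)))
            + Sm (((cs.filterMap Prod.fst).map split).sections) (fun ds =>
                g (some (CTree.node l (ds.filterMap Prod.fst)))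
                  * Pf φy ((ds.map Prod.snd).flatten)))
          * Pf φx ((cs.map Prod.snd).flatten) := by
      intro cs _
      rw [split_node, Sm_cons, Sm_map]
      simp only [Pf_cons, Pf_nil, mul_one]
    rw [Sm_congr inner]
    -- RHS: expand Pf (comp φx φy) [node l ts]
    have rhs1 : Pf (comp φx φy) [CTree.node l ts]
        = φx (some (CTree.node l ts))
          + Sm ((ts.map split).sections) (fun cs =>
              φy (some (CTree.node l (cs.filterMap Prod.fst)))
                * Pf φx ((cs.map Prod.snd).flatten)) := by
      rw [Pf_cons, Pf_nil, mul_one, comp_eq_Sm, split_node, Sm_cons, Sm_map]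
      simp only [Pf_cons, Pf_nil, mul_one, hy, one_mul]
    rw [rhs1]
    have distrib : Sm ((ts.map split).sections) (fun cs =>
        (g none * φy (some (CTree.node l (cs.filterMap Prod.fst)))
          + Sm (((cs.filterMap Prod.fst).map split).sections) (fun ds =>
              g (some (CTree.node l (ds.filterMap Prod.fst)))
                * Pf φy ((ds.map Prod.snd).flatten)))
        * Pf φx ((cs.map Prod.snd).flatten))
        = g none * Sm ((ts.map split).sections) (fun cs =>
            φy (some (CTree.node l (cs.filterMap Prod.fst)))
              * Pf φx ((cs.map Prod.snd).flatten))
          + Sm ((ts.map split).sections) (fun cs =>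
              Sm (((cs.filterMap Prod.fst).map split).sections) (fun ds =>
                g (some (CTree.node l (ds.filterMap Prod.fst)))
                  * Pf φy ((ds.map Prod.snd).flatten))
              * Pf φx ((cs.map Prod.snd).flatten)) := by
      rw [Sm_mul_left, ← Sm_add]
      apply Sm_congr
      intro cs _
      ring
    rw [distrib]
    have hstar := star_lem φx φy ts (fun xs => g (some (CTree.node l xs))) hK
    rw [hstar]
    simp only [Sm_cons, Sm_nil, Pf_cons, Pf_nil, mul_one, add_zero]
    ring

theorem assoc_main (φx φy φz : Option (CTree m) → R) (hy : φy none = 1)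
    (t : Option (CTree m)) :
    comp φx (comp φy φz) t = comp (comp φx φy) φz t := by
  cases t with
  | none => rfl
  | some τ =>
    show Sm (split τ) (fun p => comp φy φz p.1 * Pf φx p.2)
      = Sm (split τ) (fun p => φz p.1 * Pf (comp φx φy) p.2)
    have e : ∀ p ∈ split τ, comp φy φz p.1 * Pf φx p.2
        = Sm (splitO p.1) (fun q => φz q.1 * Pf φy q.2) * Pf φx p.2 := by
      intro p _
      rw [comp_splitO]
    rw [Sm_congr e]
    exact Mlem φx φy hy (sizeOf τ) τ le_rfl φz

end BAssoc


open CTree in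
theorem stmt18 {R : Type*} [CommRing R] (m : ℕ)
    (φx φy φz : Option (CTree m) → R) (hx : φx none = 1) (hy : φy none = 1) :
    ∀ t : Option (CTree m), comp φx (comp φy φz) t = comp (comp φx φy) φz t := fun t => BAssoc.assoc_main φx φy φz hy t
end
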